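/- Fix (l,m) ∈ ℤ² and complex numbers U, Ub, Ut, Uh (representing U(l,m), U(l+1,m), U(l,m+1), U(l+1,m+1)). For ε ∈ ℂ with ε ∉ {0,−1}, set α(ε) = ε(ε+1), β(ε) = ε², and define u = ε(2εU − (ε+1)l − εm), ub = ε(2εUb − (ε+1)(l+1) − εm), ut = ε(2εUt − (ε+1)l − ε(m+1)), uh = ε(2εUh − (ε+1)(l+1) − ε(m+1)). Then, as ε → 0 (through values ε ∉ {0,−1}), the function ε ↦ (1/ε)·( (u−ut)(ub−uh)/(β(ε)(β(ε)−α(ε))) − (u−ub)(ut−uh)/(α(ε)(β(ε)−α(ε))) − 1 ) tends to −4·( (U−Ut)(Ub−Uh) − (Ut−Ub) ). In particular, the Q1_{δ=1} quad relation degenerates in this limit to the HV quad relation (U−Ut)(Ub−Uh) = Ut−Ub. -/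

import Mathlib

open Filter Topology

/-- Degeneration of the Q1_{δ=1} quad relation to the HV quad relation: with the
substitution α = ε(ε+1), β = ε², u = ε(2εU − (ε+1)l − εm) (and its shifts), the
rescaled Q1_{δ=1} expression tends, as ε → 0 within ℂ∖{0,−1}, to
−4·((U−Ut)(Ub−Uh) − (Ut−Ub)). -/
theorem Q1_degenerates_to_HV (l m : ℤ) (U Ub Ut Uh : ℂ)
    (α β : ℂ → ℂ)
    (hα : ∀ ε : ℂ, α ε = ε * (ε + 1)) (hβ : ∀ ε : ℂ, β ε = ε ^ 2)
    (u ub ut uh : ℂ → ℂ)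
    (hu : ∀ ε : ℂ, u ε = ε * (2 * ε * U - (ε + 1) * (l : ℂ) - ε * (m : ℂ)))
    (hub : ∀ ε : ℂ, ub ε = ε * (2 * ε * Ub - (ε + 1) * ((l : ℂ) + 1) - ε * (m : ℂ)))
    (hut : ∀ ε : ℂ, ut ε = ε * (2 * ε * Ut - (ε + 1) * (l : ℂ) - ε * ((m : ℂ) + 1)))
    (huh : ∀ ε : ℂ, uh ε = ε * (2 * ε * Uh - (ε + 1) * ((l : ℂ) + 1) - ε * ((m : ℂ) + 1))) :
    Tendsto
      (fun ε : ℂ =>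
        (1 / ε) *
          ((u ε - ut ε) * (ub ε - uh ε) / (β ε * (β ε - α ε))
            - (u ε - ub ε) * (ut ε - uh ε) / (α ε * (β ε - α ε)) - 1))
      (nhdsWithin 0 {(0 : ℂ), -1}ᶜ)
      (nhds (-4 * ((U - Ut) * (Ub - Uh) - (Ut - Ub)))) := by
  have hg : Tendsto
      (fun ε : ℂ => -((2*(U-Ut)+1) * (2*(Ub-Uh)+1))
        + 4*ε*(U-Ub)*(Ut-Uh)/(ε+1) + 2*((U-Ub)+(Ut-Uh)) + 1)
      (nhdsWithin 0 {(0 : ℂ), -1}ᶜ)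
      (nhds (-4 * ((U - Ut) * (Ub - Uh) - (Ut - Ub)))) := by
    have hc : ContinuousAt
        (fun ε : ℂ => -((2*(U-Ut)+1) * (2*(Ub-Uh)+1))
          + 4*ε*(U-Ub)*(Ut-Uh)/(ε+1) + 2*((U-Ub)+(Ut-Uh)) + 1) 0 := by
      apply ContinuousAt.add
      apply ContinuousAt.add
      apply ContinuousAt.add
      · exact continuousAt_const
      · exact ContinuousAt.div (by fun_prop) (by fun_prop) (by norm_num)
      · exact continuousAt_const
      · exact continuousAt_const
    have := hc.tendsto.mono_left (nhdsWithin_le_nhds : nhdsWithin (0:ℂ) {(0:ℂ), -1}ᶜ ≤ nhds 0)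
    simp only [mul_zero, zero_mul, zero_add, div_one] at this
    convert this using 2
    ring
  refine hg.congr' ?_
  filter_upwards [self_mem_nhdsWithin] with ε hε
  simp only [Set.mem_compl_iff, Set.mem_insert_iff, Set.mem_singleton_iff, not_or] at hε
  obtain ⟨h0, h1⟩ := hε
  have h1' : ε + 1 ≠ 0 := fun h => h1 (by linear_combination h)
  rw [hu, hub, hut, huh, hα, hβ]
  have e1 : (ε:ℂ)^2*(ε^2 - ε*(ε+1)) = -(ε^3) := by ring
  have e2 : (ε:ℂ)*(ε+1)*(ε^2-ε*(ε+1)) = -(ε^2*(ε+1)) := by ring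
  rw [e1, e2]
  simp only [div_neg, neg_div]
  have hd : (ε:ℂ)^6 + ε^7 ≠ 0 := by
    intro h
    exact mul_ne_zero (pow_ne_zero 6 h0) h1' (by linear_combination h)
  field_simp [hd]
  ring
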